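/- Let P be the Hardy projection on L²(𝕋) and let g : 𝕋 → ℂ be continuous with absolutely summable Fourier coefficients, i.e. the family (‖ĝ(n)‖)_{n ∈ ℤ} is summable. Then the commutator [P, M_g] = P ∘ M_g − M_g ∘ P is a compact operator on L²(𝕋). In particular this holds when g is smooth. -/

import Mathlib

open MeasureTheory AddCircle

instance : Fact (0 < 2 * Real.pi) := ⟨by positivity⟩

namespace ToeplitzAux

noncomputable section

open Filter ContinuousLinearMap

local notation "T₀" => (2 * Real.pi)
local notation "μ₀" => haarAddCircle (T := 2 * Real.pi)
local notation "H" => Lp ℂ 2 (haarAddCircle (T := 2 * Real.pi))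

lemma mem_mul (h : C(AddCircle T₀, ℂ)) (f : H) :
    (h.toAEEqFun μ₀) * (f : AddCircle T₀ →ₘ[μ₀] ℂ) ∈ Lp ℂ 2 μ₀ := by
  refine Lp.mem_Lp_of_ae_le_mul (c := ‖h‖) (g := f) ?_
  filter_upwards [AEEqFun.coeFn_mul (h.toAEEqFun μ₀) (f : AddCircle T₀ →ₘ[μ₀] ℂ),
    h.coeFn_toAEEqFun μ₀] with t h1 h2
  rw [h1, Pi.mul_apply, h2, norm_mul]
  exact mul_le_mul_of_nonneg_right (h.norm_coe_le_norm t) (norm_nonneg _)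

def mulFun (h : C(AddCircle T₀, ℂ)) (f : H) : H :=
  ⟨(h.toAEEqFun μ₀) * (f : AddCircle T₀ →ₘ[μ₀] ℂ), mem_mul h f⟩

lemma coeFn_mulFun (h : C(AddCircle T₀, ℂ)) (f : H) :
    ⇑(mulFun h f) =ᵐ[μ₀] fun t => h t * f t := by
  filter_upwards [AEEqFun.coeFn_mul (h.toAEEqFun μ₀) (f : AddCircle T₀ →ₘ[μ₀] ℂ),
    h.coeFn_toAEEqFun μ₀] with t h1 h2
  show ((h.toAEEqFun μ₀) * (f : AddCircle T₀ →ₘ[μ₀] ℂ)) t = _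
  rw [h1, Pi.mul_apply, h2]

lemma norm_mulFun_le (h : C(AddCircle T₀, ℂ)) (f : H) :
    ‖mulFun h f‖ ≤ ‖h‖ * ‖f‖ := by
  refine Lp.norm_le_mul_norm_of_ae_le_mul ?_
  filter_upwards [coeFn_mulFun h f] with t ht
  rw [ht, norm_mul]
  exact mul_le_mul_of_nonneg_right (h.norm_coe_le_norm t) (norm_nonneg _)

def mulLin : C(AddCircle T₀, ℂ) →ₗ[ℂ] (H →ₗ[ℂ] H) where
  toFun h :=
    { toFun := mulFun h
      map_add' := fun f g => by
        apply Lp.ext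
        filter_upwards [coeFn_mulFun h (f + g), coeFn_mulFun h f, coeFn_mulFun h g,
          Lp.coeFn_add f g, Lp.coeFn_add (mulFun h f) (mulFun h g)] with t h1 h2 h3 h4 h5
        rw [h1, h4, h5, Pi.add_apply, Pi.add_apply, h2, h3, mul_add]
      map_smul' := fun c f => by
        apply Lp.ext
        filter_upwards [coeFn_mulFun h (c • f), coeFn_mulFun h f,
          Lp.coeFn_smul c f, Lp.coeFn_smul c (mulFun h f)] with t h1 h2 h3 h4
        rw [RingHom.id_apply, h4, Pi.smul_apply, h1, h3, Pi.smul_apply, h2,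
          smul_eq_mul, smul_eq_mul]
        ring }
  map_add' := fun h₁ h₂ => by
    ext f
    filter_upwards [coeFn_mulFun (h₁ + h₂) f, coeFn_mulFun h₁ f, coeFn_mulFun h₂ f,
      Lp.coeFn_add (mulFun h₁ f) (mulFun h₂ f)] with t h1 h2 h3 h4
    show (mulFun (h₁ + h₂) f) t = (mulFun h₁ f + mulFun h₂ f) t
    rw [h1, h4, Pi.add_apply, h2, h3, ContinuousMap.add_apply, add_mul]
  map_smul' := fun c h => by
    ext f
    filter_upwards [coeFn_mulFun (c • h) f, coeFn_mulFun h f,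
      Lp.coeFn_smul c (mulFun h f)] with t h1 h2 h3
    show (mulFun (c • h) f) t = (c • mulFun h f) t
    rw [h1, h3, Pi.smul_apply, h2, ContinuousMap.smul_apply, smul_eq_mul,
      smul_eq_mul, mul_assoc]

def mulL : C(AddCircle T₀, ℂ) →L[ℂ] (H →L[ℂ] H) :=
  LinearMap.mkContinuous₂ mulLin 1 (fun h f => by
    rw [one_mul]; exact norm_mulFun_le h f)

lemma coeFn_mulL (h : C(AddCircle T₀, ℂ)) (f : H) :
    ⇑(mulL h f) =ᵐ[μ₀] fun t => h t * f t := coeFn_mulFun h f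

lemma fourierCoeff_mulL (n : ℤ) (f : H) (m : ℤ) :
    fourierCoeff (⇑(mulL (fourier n) f)) m = fourierCoeff (⇑f) (m - n) := by
  have h1 : (fun t => fourier (-m) t • (mulL (fourier n) f) t)
      =ᵐ[μ₀] fun t => fourier (-(m - n)) t • f t := by
    filter_upwards [coeFn_mulL (fourier n) f] with t ht
    rw [ht]
    have hmn : (-(m - n)) = -m + n := by ring
    rw [hmn, fourier_add]
    simp only [smul_eq_mul]
    ring
  simp only [fourierCoeff]
  exact integral_congr_ae h1

lemma fourierCoeff_sub (x y : H) (m : ℤ) :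
    fourierCoeff (⇑(x - y)) m = fourierCoeff (⇑x) m - fourierCoeff (⇑y) m := by
  rw [← fourierBasis_repr, ← fourierBasis_repr, ← fourierBasis_repr, map_sub]
  rw [lp.coeFn_sub]
  rfl

def hankelL (P : H →L[ℂ] H) : C(AddCircle T₀, ℂ) →L[ℂ] (H →L[ℂ] H) :=
  (ContinuousLinearMap.compL ℂ H H H P).comp mulL -
    ((ContinuousLinearMap.compL ℂ H H H).flip P).comp mulL

lemma hankelL_apply (P : H →L[ℂ] H) (h : C(AddCircle T₀, ℂ)) (f : H) :
    hankelL P h f = P (mulL h f) - mulL h (P f) := rfl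

/-- The index set outside which the Hankel coefficient vanishes. -/
def hS (n : ℤ) : Finset ℤ := Finset.Ico (-(n.natAbs : ℤ)) (n.natAbs : ℤ)

/-- coefficient appearing in the Hankel operator for `fourier n`. -/
def hc (n m : ℤ) : ℂ := (if 0 ≤ m then 1 else 0) - (if 0 ≤ m - n then 1 else 0)

lemma hc_eq_zero {n m : ℤ} (hm : m ∉ hS n) : hc n m = 0 := by
  have h : (0 ≤ m) ↔ (0 ≤ m - n) := by
    simp only [hS, Finset.mem_Ico, not_and_or, not_le, not_lt] at hm
    omega
  unfold hc
  by_cases h0 : 0 ≤ m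
  · rw [if_pos h0, if_pos (h.1 h0), sub_self]
  · rw [if_neg h0, if_neg (fun hh => h0 (h.2 hh)), sub_self]

lemma fourierCoeff_hankel (P : H →L[ℂ] H)
    (hP : ∀ (f : H) (n : ℤ),
      fourierCoeff (⇑(P f)) n = if 0 ≤ n then fourierCoeff (⇑f) n else 0)
    (n : ℤ) (f : H) (m : ℤ) :
    fourierCoeff (⇑(hankelL P (fourier n) f)) m = hc n m * fourierCoeff (⇑f) (m - n) := by
  rw [hankelL_apply, fourierCoeff_sub, hP, fourierCoeff_mulL, fourierCoeff_mulL, hP]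
  unfold hc
  by_cases h0 : 0 ≤ m <;> by_cases h1 : 0 ≤ m - n <;> simp [h0, h1] <;> split_ifs <;> simp

def rankT (n : ℤ) : H →L[ℂ] H :=
  ∑ m ∈ hS n,
    hc n m • ((innerSL ℂ ((fourierBasis (T := T₀)) (m - n))).smulRight
      ((fourierBasis (T := T₀)) m))

lemma fourierCoeff_rankT (n : ℤ) (f : H) (i : ℤ) :
    fourierCoeff (⇑(rankT n f)) i = hc n i * fourierCoeff (⇑f) (i - n) := by
  classical
  rw [← fourierBasis_repr]
  have step : ∀ m : ℤ, fourierBasis.repr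
      ((hc n m • ((innerSL ℂ ((fourierBasis (T := T₀)) (m - n))).smulRight
        ((fourierBasis (T := T₀)) m))) f)
      = lp.single 2 m (hc n m * fourierCoeff (⇑f) (m - n)) := by
    intro m
    rw [ContinuousLinearMap.smul_apply, ContinuousLinearMap.smulRight_apply, innerSL_apply_apply,
      _root_.map_smul, _root_.map_smul, ← HilbertBasis.repr_apply_apply, HilbertBasis.repr_self,
      fourierBasis_repr, smul_smul]
    have h1 : (hc n m * fourierCoeff (⇑f) (m - n)) •
          (lp.single 2 m (1 : ℂ) : lp (fun _ : ℤ => ℂ) 2)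
        = (lp.single 2 m (hc n m * fourierCoeff (⇑f) (m - n)) : lp (fun _ : ℤ => ℂ) 2) := by
      rw [← lp.single_smul, smul_eq_mul, mul_one]
    exact h1
  have hsum : fourierBasis.repr ((rankT n) f)
      = ∑ m ∈ hS n, lp.single 2 m (hc n m * fourierCoeff (⇑f) (m - n)) := by
    rw [rankT, ContinuousLinearMap.sum_apply, map_sum]
    exact Finset.sum_congr rfl fun m _ => step m
  rw [hsum, lp.coeFn_sum, Finset.sum_apply]
  by_cases hi : i ∈ hS n
  · rw [Finset.sum_eq_single i]
    · exact lp.single_apply_self 2 i _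
    · intro m _ hmi
      exact lp.single_apply_ne 2 m _ (Ne.symm hmi)
    · exact fun h => absurd hi h
  · rw [Finset.sum_eq_zero, hc_eq_zero hi, zero_mul]
    intro m hm
    have hmi : i ≠ m := fun h => hi (h ▸ hm)
    exact lp.single_apply_ne 2 m _ hmi

lemma hankel_eq_rankT (P : H →L[ℂ] H)
    (hP : ∀ (f : H) (n : ℤ),
      fourierCoeff (⇑(P f)) n = if 0 ≤ n then fourierCoeff (⇑f) n else 0)
    (n : ℤ) : hankelL P (fourier n) = rankT n := by
  refine ContinuousLinearMap.ext fun f => ?_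
  apply fourierBasis.repr.injective
  refine lp.ext (funext fun i => ?_)
  show fourierBasis.repr _ i = fourierBasis.repr _ i
  rw [fourierBasis_repr, fourierBasis_repr, fourierCoeff_hankel P hP, fourierCoeff_rankT]

lemma isCompactOperator_smulRight (φ : H →L[ℂ] ℂ) (v : H) :
    IsCompactOperator ⇑(φ.smulRight v) := by
  have h1 : IsCompactOperator (fun c : ℂ => c • v) := by
    refine ⟨(fun c : ℂ => c • v) '' Metric.closedBall 0 1,
      ((isCompact_closedBall (0 : ℂ) 1).image (by fun_prop)), ?_⟩
    exact Filter.mem_of_superset (Metric.closedBall_mem_nhds 0 one_pos)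
      (Set.subset_preimage_image _ _)
  exact h1.comp_clm φ

lemma isCompactOperator_finsetSum (s : Finset ℤ) (F : ℤ → H →L[ℂ] H)
    (h : ∀ i, IsCompactOperator ⇑(F i)) :
    IsCompactOperator ⇑(∑ i ∈ s, F i) := by
  classical
  induction s using Finset.induction with
  | empty => simpa using isCompactOperator_zero
  | insert _ _ hnot ih =>
    rw [Finset.sum_insert hnot, ContinuousLinearMap.coe_add']
    exact (h _).add ih

lemma isCompactOperator_rankT (n : ℤ) : IsCompactOperator ⇑(rankT n) := by
  refine isCompactOperator_finsetSum (hS n) _ fun m => ?_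
  rw [ContinuousLinearMap.coe_smul']
  exact (isCompactOperator_smulRight _ _).smul _

end

end ToeplitzAux

/-- For the Hardy projection `P` on `L²(𝕋)` and a continuous `g : 𝕋 → ℂ` whose Fourier
coefficients are absolutely summable, the commutator `[P, M_g] = P M_g - M_g P` with the
multiplication operator `M_g` is compact. (In particular this applies to smooth `g`.) -/
theorem toeplitz_stmt8
    (g : C(AddCircle (2 * Real.pi), ℂ))
    (hg : Summable fun n : ℤ => ‖fourierCoeff (⇑g) n‖)
    (P M : Lp ℂ 2 (haarAddCircle (T := 2 * Real.pi)) →L[ℂ]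
      Lp ℂ 2 (haarAddCircle (T := 2 * Real.pi)))
    (hP : ∀ (f : Lp ℂ 2 (haarAddCircle (T := 2 * Real.pi))) (n : ℤ),
      fourierCoeff (⇑(P f)) n = if 0 ≤ n then fourierCoeff (⇑f) n else 0)
    (hM : ∀ f : Lp ℂ 2 (haarAddCircle (T := 2 * Real.pi)),
      ⇑(M f) =ᵐ[haarAddCircle] fun t => g t * f t) :
    IsCompactOperator ⇑(P * M - M * P) := by
  classical
  have hMg : M = ToeplitzAux.mulL g := by
    refine ContinuousLinearMap.ext fun f => ?_
    apply Lp.ext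
    exact (hM f).trans (ToeplitzAux.coeFn_mulL g f).symm
  have hsum : HasSum (fun n : ℤ => fourierCoeff (⇑g) n • fourier n) g :=
    hasSum_fourier_series_of_summable (Summable.of_norm hg)
  have hsum2 : HasSum (fun n : ℤ => fourierCoeff (⇑g) n • ToeplitzAux.hankelL P (fourier n))
      (ToeplitzAux.hankelL P g) := by
    have h := (ToeplitzAux.hankelL P).hasSum hsum
    simpa only [_root_.map_smul] using h
  have hgoal : P * M - M * P = ToeplitzAux.hankelL P g := by
    rw [hMg]; rfl
  rw [hgoal]
  refine isCompactOperator_of_tendsto hsum2 ?_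
  refine Filter.Eventually.of_forall fun s => ?_
  refine ToeplitzAux.isCompactOperator_finsetSum s _ fun n => ?_
  rw [ContinuousLinearMap.coe_smul', ToeplitzAux.hankel_eq_rankT P hP]
  exact (ToeplitzAux.isCompactOperator_rankT n).smul _
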